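/- For every θ ∈ ℝ and t ∈ [0,1], |t e^{iθ} + (1-t) e^{-iθ}| = √(cos²θ + (2t-1)² sin²θ), and if sin θ ≠ 0 then ∫₀¹ √(cos²θ + (2t-1)² sin²θ) dt = 1/2 + (1/4)|sin θ| cot²θ · log((1 + |sin θ|)/(1 - |sin θ|)). -/

import Mathlib

open Real
lemma key_deriv (a b : ℝ) (ha : 0 < a) (hb : 0 < b) (t : ℝ) :
    HasDerivAt (fun t => (2*t-1)/4 * Real.sqrt (a^2 + b^2*(2*t-1)^2)
        + a^2/(4*b) * Real.arsinh (b*(2*t-1)/a))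
      (Real.sqrt (a^2 + b^2*(2*t-1)^2)) t := by
  have hpos : 0 < a^2 + b^2*(2*t-1)^2 := by positivity
  have hS : 0 < Real.sqrt (a^2 + b^2*(2*t-1)^2) := Real.sqrt_pos.2 hpos
  have hS2 : (Real.sqrt (a^2 + b^2*(2*t-1)^2))^2 = a^2 + b^2*(2*t-1)^2 :=
    Real.sq_sqrt hpos.le
  -- derivative of inner polynomial
  have hu : HasDerivAt (fun t : ℝ => 2*t-1) 2 t := by
    simpa using ((hasDerivAt_id t).const_mul 2).sub_const 1
  have hin : HasDerivAt (fun t : ℝ => a^2 + b^2*(2*t-1)^2) (b^2*(2*(2*t-1)*2)) t := by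
    simpa using ((hu.pow 2).const_mul (b^2)).const_add (a^2)
  have hsqrt : HasDerivAt (fun t => Real.sqrt (a^2 + b^2*(2*t-1)^2))
      (b^2*(2*(2*t-1)*2) / (2 * Real.sqrt (a^2 + b^2*(2*t-1)^2))) t :=
    hin.sqrt hpos.ne'
  have h1 : HasDerivAt (fun t => (2*t-1)/4 * Real.sqrt (a^2 + b^2*(2*t-1)^2))
      (2/4 * Real.sqrt (a^2 + b^2*(2*t-1)^2)
        + (2*t-1)/4 * (b^2*(2*(2*t-1)*2) / (2 * Real.sqrt (a^2 + b^2*(2*t-1)^2)))) t :=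
    (hu.div_const 4).mul hsqrt
  -- arsinh part
  have harg : HasDerivAt (fun t : ℝ => b*(2*t-1)/a) (b*2/a) t := by
    simpa using (hu.const_mul b).div_const a
  have harsinh : HasDerivAt (fun t => Real.arsinh (b*(2*t-1)/a))
      ((Real.sqrt (1 + (b*(2*t-1)/a)^2))⁻¹ * (b*2/a)) t :=
    (Real.hasDerivAt_arsinh _).comp t harg
  have hsq : Real.sqrt (1 + (b*(2*t-1)/a)^2) = Real.sqrt (a^2 + b^2*(2*t-1)^2) / a := by
    rw [show 1 + (b*(2*t-1)/a)^2 = (a^2 + b^2*(2*t-1)^2) / a^2 by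
      field_simp]
    rw [Real.sqrt_div hpos.le, Real.sqrt_sq ha.le]
  have h2 : HasDerivAt (fun t => a^2/(4*b) * Real.arsinh (b*(2*t-1)/a))
      (a^2/(4*b) * ((Real.sqrt (1 + (b*(2*t-1)/a)^2))⁻¹ * (b*2/a))) t :=
    harsinh.const_mul _
  have := h1.add h2
  refine this.congr_deriv (Eq.symm ?_)
  rw [hsq]
  set S := Real.sqrt (a^2 + b^2*(2*t-1)^2) with hSdef
  field_simp
  linear_combination 2 * hS2

lemma key_integral (a b : ℝ) (ha : 0 < a) (hb : 0 < b) (hab : a^2 + b^2 = 1) :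
    (∫ t in (0:ℝ)..1, Real.sqrt (a^2 + b^2*(2*t-1)^2))
      = 1/2 + a^2/(2*b) * Real.arsinh (b/a) := by
  have hcont : Continuous (fun t : ℝ => Real.sqrt (a^2 + b^2*(2*t-1)^2)) := by
    fun_prop
  have hderiv : ∀ t ∈ Set.uIcc (0:ℝ) 1,
      HasDerivAt (fun t => (2*t-1)/4 * Real.sqrt (a^2 + b^2*(2*t-1)^2)
        + a^2/(4*b) * Real.arsinh (b*(2*t-1)/a))
      (Real.sqrt (a^2 + b^2*(2*t-1)^2)) t := fun t _ => key_deriv a b ha hb t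
  rw [intervalIntegral.integral_eq_sub_of_hasDerivAt hderiv (hcont.intervalIntegrable 0 1)]
  have h1 : a^2 + b^2*(2*(1:ℝ)-1)^2 = 1 := by linear_combination hab
  have h0 : a^2 + b^2*(2*(0:ℝ)-1)^2 = 1 := by linear_combination hab
  simp only [h1, h0]
  rw [Real.sqrt_one]
  rw [show b*(2*(1:ℝ)-1)/a = b/a by ring, show b*(2*(0:ℝ)-1)/a = -(b/a) by ring,
    Real.arsinh_neg]
  ring

lemma arsinh_log (a b : ℝ) (ha : 0 < a) (hb : 0 < b) (hab : a^2 + b^2 = 1) :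
    Real.arsinh (b/a) = 1/2 * Real.log ((1+b)/(1-b)) := by
  have hsq : Real.sqrt (1 + (b/a)^2) = 1/a := by
    rw [show 1 + (b/a)^2 = 1/a^2 by field_simp; linarith [hab]]
    rw [Real.sqrt_div' 1 (by positivity), Real.sqrt_one, Real.sqrt_sq ha.le]
  have : Real.arsinh (b/a) = Real.log (b/a + Real.sqrt (1 + (b/a)^2)) := rfl
  rw [this, hsq, show b/a + 1/a = (1+b)/a by field_simp; ring]
  have hb1 : b < 1 := by nlinarith
  have hb1' : (1:ℝ) - b ≠ 0 := by linarith
  have h2 : (1+b)/(1-b) = ((1+b)/a)^2 := by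
    field_simp
    linear_combination hab
  rw [h2, Real.log_pow]
  push_cast
  ring

/-- For every `θ ∈ ℝ` and `t ∈ [0,1]`,
`|t e^{iθ} + (1-t) e^{-iθ}| = √(cos²θ + (2t-1)² sin²θ)`, and if `0 < |sin θ| < 1` then
`∫₀¹ √(cos²θ + (2t-1)² sin²θ) dt
  = 1/2 + (1/4)|sin θ| cot²θ log((1+|sin θ|)/(1-|sin θ|))`. -/
theorem abs_convex_combination_exp (θ : ℝ) :
    (∀ t ∈ Set.Icc (0:ℝ) 1,
      ‖((t : ℂ) * Complex.exp ((θ : ℂ) * Complex.I) +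
          ((1 - t : ℝ) : ℂ) * Complex.exp (-(θ : ℂ) * Complex.I))‖
        = Real.sqrt (Real.cos θ ^ 2 + (2*t - 1) ^ 2 * Real.sin θ ^ 2)) ∧
    (Real.sin θ ≠ 0 → |Real.sin θ| < 1 →
      (∫ t in (0:ℝ)..1, Real.sqrt (Real.cos θ ^ 2 + (2*t - 1) ^ 2 * Real.sin θ ^ 2))
        = 1/2 + (1/4) * |Real.sin θ| * (Real.cos θ / Real.sin θ) ^ 2 *
            Real.log ((1 + |Real.sin θ|) / (1 - |Real.sin θ|))) := by
  constructor
  · intro t _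
    have he1 : Complex.exp ((θ:ℂ)*Complex.I)
        = (Real.cos θ : ℂ) + (Real.sin θ : ℂ) * Complex.I := by
      rw [Complex.exp_mul_I, Complex.ofReal_cos, Complex.ofReal_sin]
    have he2 : Complex.exp (-(θ:ℂ)*Complex.I)
        = (Real.cos θ : ℂ) - (Real.sin θ : ℂ) * Complex.I := by
      rw [show -(θ:ℂ)*Complex.I = ((-θ : ℝ):ℂ)*Complex.I by push_cast; ring,
        Complex.exp_mul_I, ← Complex.ofReal_cos, ← Complex.ofReal_sin,
        Real.cos_neg, Real.sin_neg]
      push_cast; ring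
    have hz : (t : ℂ) * Complex.exp ((θ:ℂ)*Complex.I)
        + ((1-t:ℝ):ℂ) * Complex.exp (-(θ:ℂ)*Complex.I)
        = (Real.cos θ : ℂ) + (((2*t-1)*Real.sin θ : ℝ):ℂ) * Complex.I := by
      rw [he1, he2]; push_cast; ring
    rw [hz, Complex.norm_add_mul_I]
    congr 1
    ring
  · intro hs hs1
    set a := |Real.cos θ| with hadef
    set b := |Real.sin θ| with hbdef
    have hb : 0 < b := abs_pos.2 hs
    have hab : a^2 + b^2 = 1 := by
      rw [hadef, hbdef, sq_abs, sq_abs, Real.cos_sq_add_sin_sq]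
    have ha : 0 < a := by
      rcases lt_or_eq_of_le (abs_nonneg (Real.cos θ)) with h | h
      · exact h
      · exfalso; nlinarith
    have hcongr : ∀ t : ℝ, Real.cos θ ^ 2 + (2*t - 1) ^ 2 * Real.sin θ ^ 2
        = a^2 + b^2*(2*t-1)^2 := by
      intro t; rw [hadef, hbdef, sq_abs, sq_abs]; ring
    simp only [hcongr]
    rw [key_integral a b ha hb hab, arsinh_log a b ha hb hab]
    have hcs : (Real.cos θ / Real.sin θ)^2 = a^2/b^2 := by
      rw [div_pow, hadef, hbdef, sq_abs, sq_abs]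
    rw [hcs]
    field_simp
    ring
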